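/- Let G be a directed graph with source s and a vertex t with maxflow(s,t,G) ≥ λ+k. Let H be the subgraph obtained from G by restricting the in-edges of t to the λ+k in-edges used by some fixed collection of λ+k edge-disjoint s-to-t paths, keeping all other edges. Then H is a (λ,k)-FT-BFP of G, and t has in-degree λ+k in H. -/

import Mathlib

open Finset

/-- `p` is a nonempty directed path/walk (as a list of edges) from `s` to `t`
using only edges of `G`. -/
def IsPath {V : Type*} (G : Finset (V × V)) (s t : V) (p : List (V × V)) : Prop :=
  p ≠ [] ∧ (∀ e ∈ p, e ∈ G) ∧ List.Chain' (fun e f => e.2 = f.1) p ∧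
    p.head?.map Prod.fst = some s ∧ p.getLast?.map Prod.snd = some t

/-- `G` contains `r` pairwise edge-disjoint paths from `s` to `t` (unit capacities). -/
def EDP {V : Type*} (G : Finset (V × V)) (s t : V) (r : ℕ) : Prop :=
  ∃ ps : Fin r → List (V × V), (∀ i, IsPath G s t (ps i)) ∧
    ∀ i j, i ≠ j → ∀ e, e ∈ ps i → e ∉ ps j

/-- Max-flow with unit capacities: the maximum number of edge-disjoint `s`-`t` paths. -/
noncomputable def maxFlow {V : Type*} (G : Finset (V × V)) (s t : V) : ℕ :=
  sSup {r | EDP G s t r}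

/-- Directed reachability in the edge set `G`. -/
def Reach {V : Type*} (G : Finset (V × V)) (s t : V) : Prop :=
  Relation.ReflTransGen (fun a b => (a, b) ∈ G) s t

def inEdges {V : Type*} [DecidableEq V] (G : Finset (V × V)) (v : V) : Finset (V × V) :=
  G.filter fun e => e.2 = v

def outDeg {V : Type*} [DecidableEq V] (G : Finset (V × V)) (v : V) : ℕ :=
  (G.filter fun e => e.1 = v).card

/-- `H` is a `(lam, k)` fault-tolerant bounded-flow-preserver of `G` w.r.t. source `s`:
for every set `F` of at most `k` failed edges and every vertex `t`, the `s`-`t` max-flow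
of `H \ F` equals that of `G \ F` whenever the latter is at most `lam`, and is at least
`lam` otherwise. -/
def IsFTBFP {V : Type*} [DecidableEq V] (G H : Finset (V × V)) (s : V) (lam k : ℕ) : Prop :=
  H ⊆ G ∧ ∀ F : Finset (V × V), F.card ≤ k → ∀ t : V,
    (maxFlow (G \ F) s t ≤ lam → maxFlow (H \ F) s t = maxFlow (G \ F) s t) ∧
    (lam < maxFlow (G \ F) s t → lam ≤ maxFlow (H \ F) s t)

/-- `H` is a `j`-fault-tolerant reachability subgraph of `G` w.r.t. source `s`. -/
def IsFTRS {V : Type*} [DecidableEq V] (G H : Finset (V × V)) (s : V) (j : ℕ) : Prop :=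
  H ⊆ G ∧ ∀ F : Finset (V × V), F.card ≤ j → ∀ t : V,
    (Reach (H \ F) s t ↔ Reach (G \ F) s t)

def IsCut {V : Type*} (A : Finset V) (s t : V) : Prop := s ∈ A ∧ t ∉ A

/-- Number of edges of `G` from `A` to its complement. -/
def cutVal {V : Type*} [DecidableEq V] (G : Finset (V × V)) (A : Finset V) : ℕ :=
  (G.filter fun e => e.1 ∈ A ∧ e.2 ∉ A).card

def IsMinCut {V : Type*} [DecidableEq V] (G : Finset (V × V)) (s t : V) (A : Finset V) : Prop :=
  IsCut A s t ∧ ∀ B : Finset V, IsCut B s t → cutVal G A ≤ cutVal G B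

def IsCutS {V : Type*} (S : Finset V) (t : V) (A : Finset V) : Prop := S ⊆ A ∧ t ∉ A

def IsMinCutS {V : Type*} [DecidableEq V] (G : Finset (V × V)) (S : Finset V) (t : V)
    (A : Finset V) : Prop :=
  IsCutS S t A ∧ ∀ B : Finset V, IsCutS S t B → cutVal G A ≤ cutVal G B

/-- Farthest min-cut: the min-cut whose source side contains the source side of
every min-cut. -/
def IsFMC {V : Type*} [DecidableEq V] (G : Finset (V × V)) (S : Finset V) (t : V)
    (A : Finset V) : Prop :=
  IsMinCutS G S t A ∧ ∀ B : Finset V, IsMinCutS G S t B → B ⊆ A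

/-- Vertices outside `A` with an in-edge from `A`. -/
def outSet {V : Type*} [DecidableEq V] (G : Finset (V × V)) (A : Finset V) : Finset V :=
  (G.filter fun e => e.1 ∈ A ∧ e.2 ∉ A).image Prod.snd

section Stmt5AuxSec
set_option linter.unusedSectionVars false
set_option linter.unreachableTactic false
set_option linter.unusedTactic false
namespace Stmt5Aux
variable {V : Type*} [DecidableEq V]

/-- indicator -/
def dlt (a w : V) : ℤ := if a = w then 1 else 0

/-- out-degree minus in-degree -/
def dg (E : Finset (V × V)) (w : V) : ℤ :=
  ∑ e ∈ E, (dlt e.1 w - dlt e.2 w)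

lemma dg_empty (w : V) : dg (∅ : Finset (V × V)) w = 0 := by simp [dg]

lemma dlt_self (a : V) : dlt a a = 1 := if_pos rfl

lemma dlt_ne {a w : V} (h : a ≠ w) : dlt a w = 0 := if_neg h

lemma dg_insert {E : Finset (V × V)} {e : V × V} (h : e ∉ E) (w : V) :
    dg (insert e E) w = dg E w + (dlt e.1 w - dlt e.2 w) := by
  simp only [dg, Finset.sum_insert h]; ring

lemma dg_union {E1 E2 : Finset (V × V)} (h : Disjoint E1 E2) (w : V) :
    dg (E1 ∪ E2) w = dg E1 w + dg E2 w := by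
  rw [dg, Finset.sum_union h]; rfl

lemma dg_sdiff {E1 E2 : Finset (V × V)} (h : E2 ⊆ E1) (w : V) :
    dg (E1 \ E2) w = dg E1 w - dg E2 w := by
  have := Finset.sum_sdiff (f := fun e : V × V => (dlt e.1 w - dlt e.2 w)) h
  rw [dg, dg, dg, ← this]; ring

lemma dg_erase {E : Finset (V × V)} {e : V × V} (h : e ∈ E) (w : V) :
    dg (E.erase e) w = dg E w - (dlt e.1 w - dlt e.2 w) := by
  have h2 : E.erase e = E \ {e} := by rw [Finset.sdiff_singleton_eq_erase]
  have h3 : dg ({e} : Finset (V × V)) w = dlt e.1 w - dlt e.2 w := by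
    rw [dg, Finset.sum_singleton]
  rw [h2, dg_sdiff (by simpa using h), h3]

lemma exists_out_edge {E : Finset (V × V)} {x : V} (h : 1 ≤ dg E x) :
    ∃ y, (x, y) ∈ E := by
  by_contra hc
  push_neg at hc
  have : dg E x ≤ 0 := by
    apply Finset.sum_nonpos
    intro e he
    have : e.1 ≠ x := by
      intro h1
      apply hc e.2
      rw [← h1]
      simpa using he
    simp only [dlt, if_neg this]
    split <;> omega
  omega

lemma sum_dg (E : Finset (V × V)) (A : Finset V) :
    ∑ w ∈ A, dg E w =
      ((E.filter fun e => e.1 ∈ A ∧ e.2 ∉ A).card : ℤ)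
      - ((E.filter fun e => e.1 ∉ A ∧ e.2 ∈ A).card : ℤ) := by
  simp only [dg]
  rw [Finset.sum_comm]
  have hterm : ∀ e : V × V, ∑ w ∈ A, (dlt e.1 w - dlt e.2 w)
      = (if e.1 ∈ A ∧ e.2 ∉ A then (1:ℤ) else 0) - (if e.1 ∉ A ∧ e.2 ∈ A then (1:ℤ) else 0) := by
    intro e
    rw [Finset.sum_sub_distrib]
    have h1 : ∑ w ∈ A, dlt e.1 w = if e.1 ∈ A then (1:ℤ) else 0 := by
      simp [dlt, Finset.sum_ite_eq]
    have h2 : ∑ w ∈ A, dlt e.2 w = if e.2 ∈ A then (1:ℤ) else 0 := by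
      simp [dlt, Finset.sum_ite_eq]
    rw [h1, h2]
    by_cases hA : e.1 ∈ A <;> by_cases hB : e.2 ∈ A <;> simp [hA, hB]
  rw [Finset.sum_congr rfl fun e _ => hterm e]
  rw [Finset.sum_sub_distrib]
  congr 1 <;> rw [Finset.sum_boole] <;> norm_num

/-! ### path basics -/

lemma isPath_mono {E E' : Finset (V × V)} (h : E ⊆ E') {a b : V} {p : List (V × V)}
    (hp : IsPath E a b p) : IsPath E' a b p :=
  ⟨hp.1, fun e he => h (hp.2.1 e he), hp.2.2⟩

lemma isPath_single {E : Finset (V × V)} {e : V × V} (h : e ∈ E) :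
    IsPath E e.1 e.2 [e] := by
  refine ⟨by simp, by simpa, List.isChain_singleton _, by simp, by simp⟩

lemma isPath_cons {E : Finset (V × V)} {e : V × V} {b : V} {p : List (V × V)}
    (he : e ∈ E) (hp : IsPath E e.2 b p) : IsPath E e.1 b (e :: p) := by
  obtain ⟨hne, hmem, hch, hhd, hlast⟩ := hp
  obtain ⟨f, q, rfl⟩ := List.exists_cons_of_ne_nil hne
  refine ⟨by simp, ?_, ?_, by simp, ?_⟩
  · intro g hg
    rcases List.mem_cons.1 hg with rfl | hg
    · exact he
    · exact hmem g hg
  · unfold List.Chain'; rw [List.isChain_cons_cons]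
    refine ⟨?_, hch⟩
    exact (by simpa using hhd : f.1 = e.2).symm
  · rw [List.getLast?_cons_cons]
    exact hlast

lemma isPath_tail {E : Finset (V × V)} {e : V × V} {a b : V} {p : List (V × V)}
    (hp : IsPath E a b (e :: p)) (hne : p ≠ []) : IsPath E e.2 b p := by
  obtain ⟨_, hmem, hch, hhd, hlast⟩ := hp
  obtain ⟨f, q, rfl⟩ := List.exists_cons_of_ne_nil hne
  unfold List.Chain' at hch; rw [List.isChain_cons_cons] at hch
  refine ⟨by simp, fun g hg => hmem g (List.mem_cons_of_mem _ hg), hch.2, ?_, ?_⟩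
  · simp [← hch.1]
  · rw [List.getLast?_cons_cons] at hlast
    exact hlast

lemma isPath_start_eq {E : Finset (V × V)} {e : V × V} {a b : V} {p : List (V × V)}
    (hp : IsPath E a b (e :: p)) : e.1 = a := by
  have := hp.2.2.2.1; simpa using this

/-- maximal trail lemma: from a vertex with positive imbalance one can walk
within `E` (using distinct edges) to a vertex with negative imbalance. -/
lemma exists_trail (E : Finset (V × V)) : ∀ x : V, 1 ≤ dg E x →
    ∃ z p, IsPath E x z p ∧ p.Nodup ∧ dg E z < 0 := by
  induction E using Finset.strongInduction with
  | _ E ih =>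
    intro x hx
    obtain ⟨y, hy⟩ := exists_out_edge hx
    by_cases hneg : dg E y < 0
    · exact ⟨y, [(x, y)], isPath_single hy, List.nodup_singleton _, hneg⟩
    push_neg at hneg
    have h1 : 1 ≤ dg (E.erase (x, y)) y := by
      rw [dg_erase hy]
      rcases eq_or_ne x y with rfl | hxy
      · simp only [dlt_self]; omega
      · simp only [dlt_ne hxy, dlt_self]; omega
    obtain ⟨z, p, hp, hnd, hz⟩ := ih (E.erase (x, y)) (Finset.erase_ssubset hy) y h1
    have hzv : dg (E.erase (x, y)) z = dg E z - (dlt x z - dlt y z) := dg_erase hy z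
    have hdgz : dg E z < 0 := by
      rcases eq_or_ne x z with rfl | hxz
      · exfalso
        rcases eq_or_ne y x with rfl | hyx
        · simp only [dlt_self] at hzv; omega
        · simp only [dlt_self, dlt_ne hyx] at hzv; omega
      · rcases eq_or_ne y z with rfl | hyz
        · simp only [dlt_ne hxz, dlt_self] at hzv; omega
        · simp only [dlt_ne hxz, dlt_ne hyz] at hzv; omega
    refine ⟨z, (x, y) :: p, isPath_cons hy (isPath_mono (Finset.erase_subset _ _) hp), ?_, hdgz⟩
    rw [List.nodup_cons]
    exact ⟨fun hmem => (Finset.notMem_erase _ _) (hp.2.1 _ hmem), hnd⟩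


/-- degree vector of the edge set of a trail -/
lemma dg_toFinset : ∀ (p : List (V × V)) {E : Finset (V × V)} {a b : V},
    IsPath E a b p → p.Nodup → ∀ w, dg p.toFinset w = dlt a w - dlt b w := by
  intro p
  induction p with
  | nil => intro E a b hp; exact absurd rfl hp.1
  | cons e q ih =>
    intro E a b hp hnd w
    have ha : e.1 = a := isPath_start_eq hp
    rcases eq_or_ne q [] with rfl | hq
    · have hb : e.2 = b := by
        have := hp.2.2.2.2; simpa using this
      simp only [List.toFinset_cons, List.toFinset_nil, LawfulSingleton.insert_empty_eq]
      rw [← ha, ← hb, dg, Finset.sum_singleton]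
    · have hq2 : IsPath E e.2 b q := isPath_tail hp hq
      have hnd2 : q.Nodup := (List.nodup_cons.1 hnd).2
      have hnotin : e ∉ q.toFinset := by
        simp only [List.mem_toFinset]; exact (List.nodup_cons.1 hnd).1
      rw [List.toFinset_cons, dg_insert hnotin, ih hq2 hnd2 w, ← ha]
      ring

/-- flow decomposition -/
lemma flow_decompose (s v : V) (hsv : s ≠ v) :
    ∀ (c : ℕ) (E : Finset (V × V)),
      (∀ w, dg E w = c * (dlt s w - dlt v w)) →
      ∃ qs : Fin c → List (V × V), (∀ i, IsPath E s v (qs i)) ∧ (∀ i, (qs i).Nodup) ∧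
        ∀ i j, i ≠ j → ∀ e, e ∈ qs i → e ∉ qs j := by
  intro c
  induction c with
  | zero => exact fun E _ => ⟨Fin.elim0, fun i => i.elim0, fun i => i.elim0, fun i => i.elim0⟩
  | succ c ih =>
    intro E hE
    have hs : 1 ≤ dg E s := by
      rw [hE s, dlt_self, dlt_ne (Ne.symm hsv)]; push_cast; omega
    obtain ⟨z, p, hp, hnd, hz⟩ := exists_trail E s hs
    have hzv : z = v := by
      by_contra h
      rcases eq_or_ne s z with rfl | hsz
      · rw [hE s, dlt_self, dlt_ne (Ne.symm hsv)] at hz; push_cast at hz; omega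
      · rw [hE z, dlt_ne hsz, dlt_ne (Ne.symm h)] at hz; push_cast at hz; omega
    rw [hzv] at hp
    have hsub : p.toFinset ⊆ E := fun e he => hp.2.1 e (List.mem_toFinset.1 he)
    have hE2 : ∀ w, dg (E \ p.toFinset) w = c * (dlt s w - dlt v w) := by
      intro w
      rw [dg_sdiff hsub, hE, dg_toFinset p hp hnd]
      push_cast; ring
    obtain ⟨qs, h1, h2, h3⟩ := ih (E \ p.toFinset) hE2
    have hmono : ∀ i, IsPath E s v (qs i) :=
      fun i => isPath_mono (Finset.sdiff_subset) (h1 i)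
    refine ⟨Fin.cons p qs, ?_, ?_, ?_⟩
    · intro i
      refine Fin.cases ?_ ?_ i
      · exact hp
      · exact fun j => hmono j
    · intro i
      refine Fin.cases ?_ ?_ i
      · exact hnd
      · exact fun j => h2 j
    · intro i j hij e hei hej
      have hqsp : ∀ j e, e ∈ qs j → e ∉ p := by
        intro j e hej hep
        have := (h1 j).2.1 e hej
        rw [Finset.mem_sdiff] at this
        exact this.2 (List.mem_toFinset.2 hep)
      rcases Fin.eq_zero_or_eq_succ i with rfl | ⟨i', rfl⟩ <;>
        rcases Fin.eq_zero_or_eq_succ j with rfl | ⟨j', rfl⟩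
      · exact hij rfl
      · simp only [Fin.cons_zero] at hei
        simp only [Fin.cons_succ] at hej
        exact hqsp j' e hej hei
      · simp only [Fin.cons_succ] at hei
        simp only [Fin.cons_zero] at hej
        exact hqsp i' e hei hej
      · simp only [Fin.cons_succ] at hei hej
        exact h3 i' j' (fun h => hij (by rw [h])) e hei hej

/-! ### maxFlow basics -/

lemma edp_zero (K : Finset (V × V)) (s v : V) : EDP K s v 0 :=
  ⟨Fin.elim0, fun i => i.elim0, fun i => i.elim0⟩

lemma edp_mono {K K' : Finset (V × V)} (h : K ⊆ K') {s v : V} {r : ℕ} :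
    EDP K s v r → EDP K' s v r := by
  rintro ⟨ps, h1, h2⟩
  exact ⟨ps, fun i => isPath_mono h (h1 i), h2⟩

lemma edp_of_le {K : Finset (V × V)} {s v : V} {r r' : ℕ} (h : r' ≤ r) :
    EDP K s v r → EDP K s v r' := by
  rintro ⟨ps, h1, h2⟩
  refine ⟨fun i => ps (Fin.castLE h i), fun i => h1 _, fun i j hij => h2 _ _ ?_⟩
  simpa using fun hh => hij (Fin.castLE_injective h hh)

lemma edp_le_card {K : Finset (V × V)} {s v : V} {r : ℕ} (h : EDP K s v r) : r ≤ K.card := by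
  obtain ⟨ps, h1, h2⟩ := h
  have : Fintype.card (Fin r) ≤ Fintype.card {x // x ∈ K} := by
    apply Fintype.card_le_of_injective
      (fun i => ⟨(ps i).head (h1 i).1, (h1 i).2.1 _ (List.head_mem (h1 i).1)⟩)
    intro i j hij
    by_contra hne
    exact h2 i j hne _ (List.head_mem (h1 i).1)
      (by rw [Subtype.mk.injEq] at hij; rw [hij]; exact List.head_mem (h1 j).1)
  simpa using this

lemma bddAbove_edp (K : Finset (V × V)) (s v : V) : BddAbove {r | EDP K s v r} :=
  ⟨K.card, fun _ h => edp_le_card h⟩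

lemma edp_maxFlow (K : Finset (V × V)) (s v : V) : EDP K s v (maxFlow K s v) := by
  have h : sSup {r | EDP K s v r} ∈ {r | EDP K s v r} :=
    Nat.sSup_mem ⟨0, edp_zero K s v⟩ (bddAbove_edp K s v)
  simpa [maxFlow] using h

lemma le_maxFlow {K : Finset (V × V)} {s v : V} {r : ℕ} (h : EDP K s v r) :
    r ≤ maxFlow K s v :=
  le_csSup (bddAbove_edp K s v) h

lemma maxFlow_mono {K K' : Finset (V × V)} (h : K ⊆ K') (s v : V) :
    maxFlow K s v ≤ maxFlow K' s v :=
  le_maxFlow (edp_mono h (edp_maxFlow K s v))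


lemma getLast?_append_right {α : Type*} (l1 l2 : List α) (h : l2 ≠ []) :
    (l1 ++ l2).getLast? = l2.getLast? := by
  rw [List.getLast?_append]
  cases l2 with
  | nil => simp at h
  | cons x xs =>
    rw [List.getLast?_cons]
    simp

/-- every walk contains a trail with the same endpoints -/
lemma exists_trail_subpath {E : Finset (V × V)} :
    ∀ (n : ℕ) (p : List (V × V)) (a b : V), p.length ≤ n → IsPath E a b p →
      ∃ q, IsPath E a b q ∧ q.Nodup ∧ ∀ e ∈ q, e ∈ p := by
  intro n
  induction n with
  | zero => intro p a b hlen hp; exact absurd (List.length_eq_zero_iff.1 (Nat.le_zero.1 hlen)) hp.1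
  | succ n ih =>
    intro p a b hlen hp
    by_cases hnd : p.Nodup
    · exact ⟨p, hp, hnd, fun e he => he⟩
    obtain ⟨e, rest, rfl⟩ := List.exists_cons_of_ne_nil hp.1
    rw [List.nodup_cons] at hnd
    push_neg at hnd
    by_cases hmem : e ∈ rest
    · -- cut out the loop: p = e :: l1 ++ e :: l2 ; use e :: l2
      obtain ⟨l1, l2, rfl⟩ := List.append_of_mem hmem
      have hsplit : e :: (l1 ++ e :: l2) = (e :: l1) ++ (e :: l2) := by simp
      have hch : List.Chain' (fun e f => (e:V×V).2 = f.1) (e :: l2) := by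
        have := hp.2.2.1
        rw [hsplit] at this; unfold List.Chain' at this; rw [List.isChain_append] at this
        exact this.2.1
      have hlast : (e :: l2).getLast?.map Prod.snd = some b := by
        have h5 := hp.2.2.2.2
        have h6 : (e :: (l1 ++ e :: l2)).getLast? = (e :: l2).getLast? := by
          have := getLast?_append_right (e :: l1) (e :: l2) (by simp)
          simpa using this
        rwa [h6] at h5
      have hp2 : IsPath E a b (e :: l2) := by
        refine ⟨by simp, ?_, hch, ?_, hlast⟩
        · intro f hf
          exact hp.2.1 f (by rcases List.mem_cons.1 hf with rfl | h
                             · simp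
                             · exact List.mem_cons_of_mem _ (List.mem_append_right _ (List.mem_cons_of_mem _ h)))
        · have := hp.2.2.2.1; simpa using this
      have hlen2 : (e :: l2).length ≤ n := by
        simp only [List.length_cons, List.length_append] at hlen ⊢
        omega
      obtain ⟨q, hq1, hq2, hq3⟩ := ih (e :: l2) a b hlen2 hp2
      refine ⟨q, hq1, hq2, fun f hf => ?_⟩
      rcases List.mem_cons.1 (hq3 f hf) with rfl | h
      · exact List.mem_cons_self
      · exact List.mem_cons_of_mem _ (List.mem_append_right _ (List.mem_cons_of_mem _ h))
    · -- e ∉ rest, so rest is not nodup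
      have hrne : rest ≠ [] := by
        rintro rfl
        exact (hnd hmem) List.nodup_nil
      have hrest : IsPath E e.2 b rest := isPath_tail hp hrne
      have hlen2 : rest.length ≤ n := by
        simp only [List.length_cons] at hlen; omega
      obtain ⟨q, hq1, hq2, hq3⟩ := ih rest e.2 b hlen2 hrest
      have hq4 : e ∉ q := fun h => hmem (hq3 e h)
      refine ⟨e :: q, ?_, List.nodup_cons.2 ⟨hq4, hq2⟩, ?_⟩
      · have := isPath_cons (hp.2.1 e (by simp)) hq1
        rwa [isPath_start_eq hp] at this
      · intro f hf
        rcases List.mem_cons.1 hf with rfl | h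
        · simp
        · exact List.mem_cons_of_mem _ (hq3 f h)

/-- dedup a relational chain of vertices -/
lemma chain_dedup {r : V → V → Prop} :
    ∀ (n : ℕ) (l : List V) (a : V), l.length ≤ n → List.Chain r a l →
      ∃ l', List.Chain r a l' ∧ (a :: l').Nodup ∧
        (a :: l').getLast? = (a :: l).getLast? := by
  intro n
  induction n with
  | zero =>
    intro l a hlen _
    rw [Nat.le_zero, List.length_eq_zero_iff] at hlen
    subst hlen
    exact ⟨[], List.Chain.nil, by simp, rfl⟩
  | succ n ih =>
    intro l a hlen hch
    by_cases hnd : (a :: l).Nodup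
    · exact ⟨l, hch, hnd, rfl⟩
    by_cases hal : a ∈ l
    · obtain ⟨l1, l2, rfl⟩ := List.append_of_mem hal
      have hch2 : List.Chain r a l2 := (List.isChain_cons_split.1 hch).2
      have hlen2 : l2.length ≤ n := by
        simp only [List.length_append, List.length_cons] at hlen; omega
      obtain ⟨l', h1, h2, h3⟩ := ih l2 a hlen2 hch2
      refine ⟨l', h1, h2, ?_⟩
      rw [h3]
      have h4 : (a :: (l1 ++ a :: l2)).getLast? = (a :: l2).getLast? := by
        have := getLast?_append_right (a :: l1) (a :: l2) (by simp)
        simpa using this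
      rw [h4]
    · -- l is not nodup
      obtain ⟨b, l'', rfl⟩ : ∃ b l'', l = b :: l'' := by
        cases l with
        | nil => simp at hnd
        | cons b l'' => exact ⟨b, l'', rfl⟩
      replace hch := List.isChain_cons_cons.1 hch
      have hlen2 : l''.length ≤ n := by
        simp only [List.length_cons] at hlen; omega
      obtain ⟨l2, h1, h2, h3⟩ := ih l'' b hlen2 hch.2
      by_cases haml : a ∈ b :: l2
      · obtain ⟨l3, l4, hbl⟩ := List.append_of_mem haml
        have hch3 : List.Chain r a (b :: l2) := List.chain_cons.2 ⟨hch.1, h1⟩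
        have hch4 : List.Chain r a l4 := by
          rw [hbl] at hch3
          exact (List.isChain_cons_split.1 hch3).2
        have hnd4 : (a :: l4).Nodup := by
          have hsl : (a :: l4).Sublist (l3 ++ a :: l4) := List.sublist_append_right _ _
          rw [← hbl] at hsl
          exact h2.sublist hsl
        refine ⟨l4, hch4, hnd4, ?_⟩
        have e1 : (a :: l4).getLast? = (b :: l2).getLast? := by
          rw [hbl]
          exact (getLast?_append_right l3 (a :: l4) (by simp)).symm
        rw [e1, h3, List.getLast?_cons_cons]
      · refine ⟨b :: l2, List.chain_cons.2 ⟨hch.1, h1⟩, List.nodup_cons.2 ⟨haml, h2⟩, ?_⟩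
        rw [List.getLast?_cons_cons, List.getLast?_cons_cons, h3]

lemma residual_toggle (K Ef : Finset (V × V)) :
    ∀ (l : List V) (a z : V),
      List.Chain (fun x y => ((x,y) ∈ K ∧ (x,y) ∉ Ef) ∨ (y,x) ∈ Ef) a l → (a :: l).Nodup →
      (a :: l).getLast? = some z →
      ∃ Fwd Bwd : Finset (V × V), Fwd ⊆ K ∧ Disjoint Fwd Ef ∧ Bwd ⊆ Ef ∧
        (∀ e ∈ Fwd ∪ Bwd, e.1 ∈ a :: l ∧ e.2 ∈ a :: l) ∧
        ∀ w, dg Fwd w - dg Bwd w = dlt a w - dlt z w := by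
  intro l
  induction l with
  | nil =>
    intro a z _ _ hz
    have : z = a := by simpa using hz.symm
    subst this
    refine ⟨∅, ∅, by simp, by simp, by simp, by simp, ?_⟩
    intro w
    simp [dg_empty]
  | cons b l ih =>
    intro a z hch hnd hz
    replace hch := List.isChain_cons_cons.1 hch
    rw [List.nodup_cons] at hnd
    have hz2 : (b :: l).getLast? = some z := by
      rw [List.getLast?_cons_cons] at hz; exact hz
    obtain ⟨F', B', hFK, hFE, hBE, hends, hdg⟩ := ih b z hch.2 hnd.2 hz2
    have hanotin : ∀ e ∈ F' ∪ B', e.1 ≠ a ∧ e.2 ≠ a := by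
      intro e he
      have h := hends e he
      exact ⟨fun h1 => hnd.1 (h1 ▸ h.1), fun h2 => hnd.1 (h2 ▸ h.2)⟩
    by_cases hS : (b, a) ∈ Ef
    · have hnB : (b, a) ∉ B' := fun h => (hanotin _ (Finset.mem_union_right _ h)).2 rfl
      refine ⟨F', insert (b, a) B', hFK, hFE, ?_, ?_, ?_⟩
      · intro e he
        rcases Finset.mem_insert.1 he with rfl | he
        · exact hS
        · exact hBE he
      · intro e he
        rcases Finset.mem_union.1 he with he | he
        · have h := hends e (Finset.mem_union_left _ he)
          exact ⟨List.mem_cons_of_mem _ h.1, List.mem_cons_of_mem _ h.2⟩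
        · rcases Finset.mem_insert.1 he with rfl | he
          · exact ⟨by simp, by simp⟩
          · have h := hends e (Finset.mem_union_right _ he)
            exact ⟨List.mem_cons_of_mem _ h.1, List.mem_cons_of_mem _ h.2⟩
      · intro w
        rw [dg_insert hnB]
        have := hdg w
        simp only []
        linarith [hdg w]
    · have hf : (a, b) ∈ K ∧ (a, b) ∉ Ef := by
        rcases hch.1 with h | h
        · exact h
        · exact absurd h hS
      have hnF : (a, b) ∉ F' := fun h => (hanotin _ (Finset.mem_union_left _ h)).1 rfl
      refine ⟨insert (a, b) F', B', ?_, ?_, hBE, ?_, ?_⟩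
      · intro e he
        rcases Finset.mem_insert.1 he with rfl | he
        · exact hf.1
        · exact hFK he
      · rw [Finset.disjoint_left]
        intro e he
        rcases Finset.mem_insert.1 he with rfl | he
        · exact hf.2
        · exact Finset.disjoint_left.1 hFE he
      · intro e he
        rcases Finset.mem_union.1 he with he | he
        · rcases Finset.mem_insert.1 he with rfl | he
          · exact ⟨by simp, by simp⟩
          · have h := hends e (Finset.mem_union_left _ he)
            exact ⟨List.mem_cons_of_mem _ h.1, List.mem_cons_of_mem _ h.2⟩
        · have h := hends e (Finset.mem_union_right _ he)
          exact ⟨List.mem_cons_of_mem _ h.1, List.mem_cons_of_mem _ h.2⟩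
      · intro w
        rw [dg_insert hnF]
        linarith [hdg w]

lemma menger [Fintype V] (K : Finset (V × V)) (s v : V) (hsv : s ≠ v) (r : ℕ)
    (hcut : ∀ A : Finset V, s ∈ A → v ∉ A → r ≤ cutVal K A) : r ≤ maxFlow K s v := by
  classical
  set m := maxFlow K s v with hm
  obtain ⟨ps0, hp0, hd0⟩ := edp_maxFlow K s v
  have htr : ∀ i : Fin m, ∃ q, IsPath K s v q ∧ q.Nodup ∧ ∀ e ∈ q, e ∈ ps0 i :=
    fun i => exists_trail_subpath (ps0 i).length (ps0 i) s v le_rfl (hp0 i)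
  choose qs hq hnd hsub using htr
  have hdisj : ∀ i j, i ≠ j → ∀ e, e ∈ qs i → e ∉ qs j :=
    fun i j hij e hei hej => hd0 i j hij e (hsub i e hei) (hsub j e hej)
  set Ef : Finset (V × V) := Finset.univ.biUnion (fun i => (qs i).toFinset) with hEf
  have hEfK : Ef ⊆ K := by
    intro e he
    rw [hEf, Finset.mem_biUnion] at he
    obtain ⟨i, _, he⟩ := he
    exact (hq i).2.1 e (List.mem_toFinset.1 he)
  have hdgEf : ∀ w, dg Ef w = (m : ℤ) * (dlt s w - dlt v w) := by
    intro w
    rw [hEf, dg, Finset.sum_biUnion]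
    · have : ∀ i : Fin m, ∑ e ∈ (qs i).toFinset, (dlt e.1 w - dlt e.2 w)
          = dlt s w - dlt v w := fun i => dg_toFinset (qs i) (hq i) (hnd i) w
      rw [Finset.sum_congr rfl (fun i _ => this i)]
      simp [Finset.card_univ, mul_comm]; ring
    · intro i _ j _ hij
      rw [Function.onFun, Finset.disjoint_left]
      intro e hei hej
      exact hdisj i j hij e (List.mem_toFinset.1 hei) (List.mem_toFinset.1 hej)
  set step : V → V → Prop := fun x y => ((x,y) ∈ K ∧ (x,y) ∉ Ef) ∨ (y,x) ∈ Ef with hstep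
  set R : Finset V := Finset.univ.filter (fun w => Relation.ReflTransGen step s w) with hR
  have hsR : s ∈ R := by
    rw [hR, Finset.mem_filter]
    exact ⟨Finset.mem_univ _, Relation.ReflTransGen.refl⟩
  have hclosed : ∀ a b, a ∈ R → step a b → b ∈ R := by
    intro a b ha hab
    rw [hR, Finset.mem_filter] at ha ⊢
    exact ⟨Finset.mem_univ _, ha.2.tail hab⟩
  by_cases hvR : v ∈ R
  · exfalso
    have hreach : Relation.ReflTransGen step s v := by
      rw [hR, Finset.mem_filter] at hvR
      exact hvR.2
    obtain ⟨l, hch, hlast⟩ := List.exists_isChain_cons_of_relationReflTransGen hreach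
    have hlast? : (s :: l).getLast? = some v := by
      rw [List.getLast?_eq_getLast (by simp), hlast]
    obtain ⟨l', hch', hnd', hlast'⟩ := chain_dedup l.length l s le_rfl hch
    rw [hlast?] at hlast'
    obtain ⟨Fwd, Bwd, h1, h2, h3, _, h5⟩ := residual_toggle K Ef l' s v hch' hnd' hlast'
    set E' : Finset (V × V) := (Ef ∪ Fwd) \ Bwd with hE'
    have hE'K : E' ⊆ K := by
      intro e he
      rw [hE', Finset.mem_sdiff, Finset.mem_union] at he
      rcases he.1 with h | h
      · exact hEfK h
      · exact h1 h
    have hdgE' : ∀ w, dg E' w = ((m+1 : ℕ) : ℤ) * (dlt s w - dlt v w) := by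
      intro w
      rw [hE', dg_sdiff (fun e he => Finset.mem_union_left _ (h3 he)), dg_union h2.symm]
      rw [hdgEf w]
      push_cast
      linarith [h5 w]
    obtain ⟨qs2, hq2, _, hd2⟩ := flow_decompose s v hsv (m+1) E' hdgE'
    have hEDP : EDP K s v (m+1) := ⟨qs2, fun i => isPath_mono hE'K (hq2 i), hd2⟩
    have hle := le_maxFlow hEDP
    rw [← hm] at hle
    omega
  · have hcR := hcut R hsR hvR
    have hcrossin : (Ef.filter fun e => e.1 ∉ R ∧ e.2 ∈ R) = ∅ := by
      rw [Finset.filter_eq_empty_iff]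
      rintro e he ⟨h1, h2⟩
      apply h1
      apply hclosed _ _ h2
      simp only [hstep]
      right
      simpa using he
    have hsum : ∑ w ∈ R, dg Ef w = (m : ℤ) := by
      rw [Finset.sum_congr rfl (fun w _ => hdgEf w), ← Finset.mul_sum]
      rw [Finset.sum_sub_distrib]
      have h1 : ∑ w ∈ R, dlt s w = 1 := by
        rw [Finset.sum_eq_single s]
        · exact dlt_self s
        · intro b _ hb; exact dlt_ne (Ne.symm hb)
        · intro h; exact absurd hsR h
      have h2 : ∑ w ∈ R, dlt v w = 0 := by
        apply Finset.sum_eq_zero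
        intro w hw
        exact dlt_ne (fun h => hvR (h ▸ hw))
      rw [h1, h2]
      ring
    have hcrossout : ((Ef.filter fun e => e.1 ∈ R ∧ e.2 ∉ R).card : ℤ) = (m : ℤ) := by
      have h := sum_dg Ef R
      rw [hcrossin, hsum] at h
      simp at h
      linarith
    have hsubfil : K.filter (fun e => e.1 ∈ R ∧ e.2 ∉ R) ⊆ Ef.filter (fun e => e.1 ∈ R ∧ e.2 ∉ R) := by
      intro e he
      rw [Finset.mem_filter] at he ⊢
      refine ⟨?_, he.2⟩
      by_contra hnotEf
      apply he.2.2
      apply hclosed _ _ he.2.1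
      simp only [hstep]
      left
      constructor
      · simpa using he.1
      · simpa using hnotEf
    have hfin : cutVal K R ≤ m := by
      unfold cutVal
      have h2 := Finset.card_le_card hsubfil
      omega
    omega



lemma cross_of_path {α : Type*} [DecidableEq α] {K : Finset (α × α)} (P : α → Prop) :
    ∀ (p : List (α × α)) (a b : α), IsPath K a b p → P a → ¬ P b →
      ∃ e ∈ p, P e.1 ∧ ¬ P e.2 := by
  intro p
  induction p with
  | nil => intro a b hp _ _; exact absurd rfl hp.1
  | cons e q ih =>
    intro a b hp hPa hPb
    by_cases hPe2 : P e.2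
    · rcases eq_or_ne q [] with rfl | hq
      · have hb : e.2 = b := by have := hp.2.2.2.2; simpa using this
        exact absurd (hb ▸ hPe2) hPb
      · obtain ⟨f, hf, h1, h2⟩ := ih e.2 b (isPath_tail hp hq) hPe2 hPb
        exact ⟨f, List.mem_cons_of_mem _ hf, h1, h2⟩
    · exact ⟨e, by simp, by rw [isPath_start_eq hp]; exact hPa, hPe2⟩

lemma le_card_of_paths {α α' : Type*} [DecidableEq α'] {r : ℕ} (p : Fin r → List α)
    (hdisj : ∀ i j, i ≠ j → ∀ e, e ∈ p i → e ∉ p j) (T : Finset α') (g : α → α')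
    (hg : Function.Injective g) (hc : ∀ i, ∃ e ∈ p i, g e ∈ T) : r ≤ T.card := by
  choose e he ht using hc
  have hcard : Fintype.card (Fin r) ≤ Fintype.card {x // x ∈ T} := by
    apply Fintype.card_le_of_injective (fun i => ⟨g (e i), ht i⟩)
    intro i j hij
    rw [Subtype.mk.injEq] at hij
    have heq := hg hij
    by_contra hne
    exact hdisj i j hne (e i) (he i) (heq ▸ he j)
  simpa using hcard

/-! ### sink-splitting transfer -/

def phi (v : V) (e : V × V) : (V ⊕ Unit) × (V ⊕ Unit) :=
  (Sum.inl e.1, if e.2 = v then Sum.inr () else Sum.inl e.2)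

lemma phi_injective (v : V) : Function.Injective (phi v) := by
  intro e f h
  rw [phi, phi, Prod.mk.injEq] at h
  obtain ⟨h1, h2⟩ := h
  have h1' : e.1 = f.1 := by simpa using h1
  have h2' : e.2 = f.2 := by
    by_cases ha : e.2 = v <;> by_cases hb : f.2 = v
    · rw [ha, hb]
    · rw [if_pos ha, if_neg hb] at h2; simp at h2
    · rw [if_neg ha, if_pos hb] at h2; simp at h2
    · rw [if_neg ha, if_neg hb] at h2; simpa using h2
  exact Prod.ext h1' h2'

def rho (v : V) : V ⊕ Unit → V := Sum.elim id (fun _ => v)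

lemma rho_phi (v : V) (e : V × V) : (rho v (phi v e).1, rho v (phi v e).2) = e := by
  rw [phi]
  by_cases h : e.2 = v
  · simp only [if_pos h, rho, Sum.elim_inl, Sum.elim_inr, id]
    exact Prod.ext rfl h.symm
  · simp [rho, h]

lemma phi_fst (v : V) (e : V × V) : (phi v e).1 = Sum.inl e.1 := rfl

lemma phi_snd_ne (v : V) {e : V × V} (h : e.2 ≠ v) : (phi v e).2 = Sum.inl e.2 := by
  rw [phi]; simp [h]

lemma phi_snd_eq (v : V) {e : V × V} (h : e.2 = v) : (phi v e).2 = Sum.inr () := by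
  rw [phi]; simp [h]

lemma push_path {K : Finset (V × V)} {v : V} :
    ∀ (p : List (V × V)) (a : V), IsPath K a v p →
      ∃ q, IsPath (K.image (phi v)) (Sum.inl a) (Sum.inr ()) q ∧
        ∀ e' ∈ q, ∃ e ∈ p, e' = phi v e := by
  intro p
  induction p with
  | nil => intro a hp; exact absurd rfl hp.1
  | cons e rest ih =>
    intro a hp
    have ha : e.1 = a := isPath_start_eq hp
    have hmem : phi v e ∈ K.image (phi v) := Finset.mem_image_of_mem _ (hp.2.1 e (by simp))
    by_cases hev : e.2 = v
    · refine ⟨[phi v e], ?_, ?_⟩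
      · have h := isPath_single hmem
        rw [phi_fst, phi_snd_eq v hev, ha] at h
        exact h
      · intro e' he'
        exact ⟨e, by simp, by simpa using he'⟩
    · have hrne : rest ≠ [] := by
        rintro rfl
        have hl := hp.2.2.2.2
        simp at hl
        exact hev hl
      obtain ⟨q, hq, hsub⟩ := ih e.2 (isPath_tail hp hrne)
      rw [← phi_snd_ne v hev] at hq
      have h := isPath_cons hmem hq
      rw [phi_fst, ha] at h
      refine ⟨phi v e :: q, h, ?_⟩
      intro e' he'
      rcases List.mem_cons.1 he' with rfl | he'
      · exact ⟨e, by simp, rfl⟩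
      · obtain ⟨f, hf, rfl⟩ := hsub e' he'
        exact ⟨f, List.mem_cons_of_mem _ hf, rfl⟩

lemma pull_edp {K : Finset (V × V)} {v s : V} {r : ℕ}
    (h : EDP (K.image (phi v)) (Sum.inl s) (Sum.inr ()) r) : EDP K s v r := by
  obtain ⟨qs, h1, h2⟩ := h
  have hpsi : ∀ i (e' : (V ⊕ Unit) × (V ⊕ Unit)), e' ∈ qs i →
      ∃ e ∈ K, phi v e = e' := by
    intro i e' he'
    exact Finset.mem_image.1 ((h1 i).2.1 e' he')
  refine ⟨fun i => (qs i).map (fun e' => (rho v e'.1, rho v e'.2)), ?_, ?_⟩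
  · intro i
    obtain ⟨hne, hmem, hch, hhd, hlast⟩ := h1 i
    refine ⟨by simpa using hne, ?_, ?_, ?_, ?_⟩
    · intro e he
      rw [List.mem_map] at he
      obtain ⟨e', he', rfl⟩ := he
      obtain ⟨f, hfK, rfl⟩ := hpsi i e' he'
      rw [rho_phi]
      exact hfK
    · unfold List.Chain'; rw [List.isChain_map]
      apply List.IsChain.imp ?_ hch
      intro e f hef
      simp only [hef]
    · rw [List.head?_map]
      cases hq : (qs i).head? with
      | none => rw [hq] at hhd; simp at hhd
      | some e' =>
        rw [hq] at hhd
        simp only [Option.map_some] at hhd ⊢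
        have : e'.1 = Sum.inl s := by simpa using hhd
        rw [Option.some.injEq]
        simp [this, rho]
    · rw [List.getLast?_map]
      cases hq : (qs i).getLast? with
      | none => rw [hq] at hlast; simp at hlast
      | some e' =>
        rw [hq] at hlast
        simp only [Option.map_some] at hlast ⊢
        have : e'.2 = Sum.inr () := by simpa using hlast
        rw [Option.some.injEq]
        simp [this, rho]
  · intro i j hij e hei hej
    rw [List.mem_map] at hei hej
    obtain ⟨e1, he1, heq1⟩ := hei
    obtain ⟨e2, he2, heq2⟩ := hej
    obtain ⟨f1, hf1, rfl⟩ := hpsi i e1 he1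
    obtain ⟨f2, hf2, rfl⟩ := hpsi j e2 he2
    rw [rho_phi] at heq1 heq2
    have hf : f1 = f2 := heq1.trans heq2.symm
    rw [hf] at he1
    exact h2 i j hij (phi v f2) he1 he2

/-! ### surviving paths -/

lemma surviving {lam k : ℕ} {Hs : Finset (V × V)} {s t : V} (ps : Fin (lam+k) → List (V × V))
    (hHps : ∀ i, IsPath Hs s t (ps i))
    (hdisj : ∀ i j, i ≠ j → ∀ e, e ∈ ps i → e ∉ ps j)
    (F : Finset (V × V)) (hF : F.card ≤ k) : EDP (Hs \ F) s t lam := by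
  classical
  set S : Finset (Fin (lam+k)) := Finset.univ.filter (fun i => ∀ e ∈ ps i, e ∉ F) with hS
  have hbad : (Finset.univ.filter (fun i : Fin (lam+k) => ¬ ∀ e ∈ ps i, e ∉ F)).card ≤ F.card := by
    have hc : ∀ i : Fin (lam+k), ∃ e, (¬ ∀ e' ∈ ps i, e' ∉ F) → (e ∈ ps i ∧ e ∈ F) := by
      intro i
      by_cases hi : ∀ e' ∈ ps i, e' ∉ F
      · exact ⟨(ps i).head (hHps i).1, fun h => absurd hi h⟩
      · push_neg at hi
        obtain ⟨e, he1, he2⟩ := hi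
        exact ⟨e, fun _ => ⟨he1, he2⟩⟩
    choose f hf using hc
    apply Finset.card_le_card_of_injOn f
    · intro i hi
      rw [Finset.mem_coe, Finset.mem_filter] at hi
      exact (hf i hi.2).2
    · intro i hi j hj hij
      have hi' : ¬ ∀ e' ∈ ps i, e' ∉ F := by simpa using hi
      have hj' : ¬ ∀ e' ∈ ps j, e' ∉ F := by simpa using hj
      by_contra hne
      exact hdisj i j hne _ (hf i hi').1 (hij ▸ (hf j hj').1)
  have hScard : lam ≤ S.card := by
    have hsplit := Finset.card_filter_add_card_filter_not
      (s := (Finset.univ : Finset (Fin (lam+k)))) (p := fun i => ∀ e ∈ ps i, e ∉ F)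
    rw [Finset.card_univ, Fintype.card_fin, ← hS] at hsplit
    omega
  obtain ⟨S', hS'sub, hS'card⟩ := Finset.exists_subset_card_eq hScard
  set em := S'.orderIsoOfFin hS'card with hem
  refine ⟨fun j => ps (em j), ?_, ?_⟩
  · intro j
    have hj : ((em j : {x // x ∈ S'}) : Fin (lam+k)) ∈ S := hS'sub (em j).2
    rw [hS, Finset.mem_filter] at hj
    obtain ⟨hne, hmem, hch, hhd, hlast⟩ := hHps (em j)
    exact ⟨hne, fun e he => Finset.mem_sdiff.2 ⟨hmem e he, hj.2 e he⟩, hch, hhd, hlast⟩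
  · intro i j hij e hei
    apply hdisj _ _ _ e hei
    intro hcontra
    apply hij
    have := Subtype.coe_injective hcontra
    exact em.injective this

/-! ### last edges -/

lemma end_edge_unique {E : Finset (V × V)} {t : V} :
    ∀ (p : List (V × V)) (a : V), IsPath E a t p → t ∉ p.map Prod.fst →
      ∀ e ∈ p, e.2 = t → p.getLast? = some e := by
  intro p
  induction p with
  | nil => intro a hp; exact absurd rfl hp.1
  | cons f q ih =>
    intro a hp hns e he het
    rcases List.mem_cons.1 he with rfl | he
    · rcases eq_or_ne q [] with rfl | hq
      · simp
      · exfalso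
        obtain ⟨g, q', rfl⟩ := List.exists_cons_of_ne_nil hq
        have hchain := hp.2.2.1
        unfold List.Chain' at hchain; rw [List.isChain_cons_cons] at hchain
        apply hns
        have hg : g.1 = t := by rw [← hchain.1, het]
        simp [hg]
    · have hq : q ≠ [] := by rintro rfl; simp at he
      have hq2 : IsPath E f.2 t q := isPath_tail hp hq
      have hns2 : t ∉ q.map Prod.fst := fun h => hns (by simp [h])
      have hlast := ih f.2 hq2 hns2 e he het
      have : (f :: q).getLast? = q.getLast? := by
        have := getLast?_append_right [f] q hq
        simpa using this
      rw [this, hlast]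

end Stmt5Aux

end Stmt5AuxSec

/-- if `maxflow(s,t,G) ≥ lam + k`, restricting the in-edges of `t` to the
`lam + k` in-edges used by a fixed family of `lam + k` edge-disjoint (simple) `s`-`t`
paths yields a `(lam,k)`-FT-BFP in which `t` has in-degree exactly `lam + k`. -/
theorem stmt_5 {V : Type*} [Fintype V] [DecidableEq V]
    (G : Finset (V × V)) (s t : V) (lam k : ℕ)
    (hflow : lam + k ≤ maxFlow G s t)
    (ps : Fin (lam + k) → List (V × V))
    (hpath : ∀ i, IsPath G s t (ps i))
    (hdisj : ∀ i j, i ≠ j → ∀ e, e ∈ ps i → e ∉ ps j)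
    (hsimple : ∀ i, ((ps i).map Prod.fst).Nodup ∧ t ∉ (ps i).map Prod.fst)
    (H : Finset (V × V)) (hH : H = G.filter fun e => e.2 = t → ∃ i, e ∈ ps i) :
    IsFTBFP G H s lam k ∧ (inEdges H t).card = lam + k := by
  classical
  have hHG : H ⊆ G := by rw [hH]; exact Finset.filter_subset _ _
  have hpsH : ∀ i, IsPath H s t (ps i) := by
    intro i
    obtain ⟨hne, hmem, hch, hhd, hlast⟩ := hpath i
    refine ⟨hne, ?_, hch, hhd, hlast⟩
    intro e he
    rw [hH, Finset.mem_filter]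
    exact ⟨hmem e he, fun _ => ⟨i, he⟩⟩
  have hlastmem : ∀ i, (ps i).getLast (hpath i).1 ∈ ps i := fun i => List.getLast_mem _
  constructor
  · refine ⟨hHG, ?_⟩
    intro F hF v
    have hQ : EDP (H \ F) s t lam := Stmt5Aux.surviving ps hpsH hdisj F hF
    have hmono : maxFlow (H \ F) s v ≤ maxFlow (G \ F) s v :=
      Stmt5Aux.maxFlow_mono (Finset.sdiff_subset_sdiff hHG (le_refl F)) s v
    have hkey : min lam (maxFlow (G \ F) s v) ≤ maxFlow (H \ F) s v := by
      by_cases hvt : v = t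
      · subst hvt
        exact le_trans (min_le_left _ _) (Stmt5Aux.le_maxFlow hQ)
      · set r := min lam (maxFlow (G \ F) s v) with hr
        have hrlam : r ≤ lam := min_le_left _ _
        have hGfam : EDP (G \ F) s v r :=
          Stmt5Aux.edp_of_le (min_le_right _ _) (Stmt5Aux.edp_maxFlow _ _ _)
        have hprimed : r ≤ maxFlow ((H \ F).image (Stmt5Aux.phi v)) (Sum.inl s) (Sum.inr ()) := by
          apply Stmt5Aux.menger _ (Sum.inl s) (Sum.inr ()) (by simp) r
          intro A' hsA' hvA'
          unfold cutVal
          by_cases htA' : Sum.inl t ∈ A'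
          · obtain ⟨p, hp, hpd⟩ := hGfam
            have hpush := fun i => Stmt5Aux.push_path (p i) s (hp i)
            choose q hq hqsub using hpush
            have hqdisj : ∀ i j, i ≠ j → ∀ e, e ∈ q i → e ∉ q j := by
              intro i j hij e hei hej
              obtain ⟨e1, he1, heq1⟩ := hqsub i e hei
              obtain ⟨e2, he2, heq2⟩ := hqsub j e hej
              have he12 : e1 = e2 := Stmt5Aux.phi_injective v (heq1.symm.trans heq2)
              exact hpd i j hij e1 he1 (he12 ▸ he2)
            apply Stmt5Aux.le_card_of_paths q hqdisj _ id Function.injective_id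
            intro i
            obtain ⟨e', he'q, he'1, he'2⟩ :=
              Stmt5Aux.cross_of_path (fun x => x ∈ A') (q i) _ _ (hq i) hsA' hvA'
            refine ⟨e', he'q, ?_⟩
            simp only [id]
            rw [Finset.mem_filter]
            refine ⟨?_, he'1, he'2⟩
            obtain ⟨e, hep, rfl⟩ := hqsub i e' he'q
            have heGF : e ∈ G \ F := (hp i).2.1 e hep
            rw [Finset.mem_sdiff] at heGF
            have heH : e ∈ H := by
              rw [hH, Finset.mem_filter]
              refine ⟨heGF.1, ?_⟩
              intro het
              exfalso
              apply he'2
              have hsnd : (Stmt5Aux.phi v e).2 = Sum.inl t := by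
                rw [Stmt5Aux.phi_snd_ne v (fun h => hvt (h.symm.trans het))]
                rw [het]
              rw [hsnd]
              exact htA'
            exact Finset.mem_image_of_mem _ (Finset.mem_sdiff.2 ⟨heH, heGF.2⟩)
          · obtain ⟨Q, hQp, hQd⟩ := hQ
            have hQd' : ∀ i j : Fin r, i ≠ j → ∀ e,
                e ∈ Q (Fin.castLE hrlam i) → e ∉ Q (Fin.castLE hrlam j) := by
              intro i j hij e
              exact hQd _ _ (fun h => hij (Fin.castLE_injective hrlam h)) e
            apply Stmt5Aux.le_card_of_paths (fun j : Fin r => Q (Fin.castLE hrlam j)) hQd' _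
              (Stmt5Aux.phi v) (Stmt5Aux.phi_injective v)
            intro j
            obtain ⟨e, hep, h1, h2⟩ :=
              Stmt5Aux.cross_of_path (fun x => Sum.inl x ∈ A') (Q (Fin.castLE hrlam j)) _ _
                (hQp _) hsA' htA'
            refine ⟨e, hep, ?_⟩
            rw [Finset.mem_filter]
            have heHF : e ∈ H \ F := (hQp _).2.1 e hep
            refine ⟨Finset.mem_image_of_mem _ heHF, ?_, ?_⟩
            · rw [Stmt5Aux.phi_fst]; exact h1
            · by_cases hev : e.2 = v
              · rw [Stmt5Aux.phi_snd_eq v hev]; exact hvA'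
              · rw [Stmt5Aux.phi_snd_ne v hev]; exact h2
        have hEDP' : EDP ((H \ F).image (Stmt5Aux.phi v)) (Sum.inl s) (Sum.inr ()) r :=
          Stmt5Aux.edp_of_le hprimed (Stmt5Aux.edp_maxFlow _ _ _)
        exact Stmt5Aux.le_maxFlow (Stmt5Aux.pull_edp hEDP')
    constructor
    · intro hle
      rw [min_eq_right hle] at hkey
      omega
    · intro hlt
      rw [min_eq_left (le_of_lt hlt)] at hkey
      omega
  · set lastE : Fin (lam + k) → V × V := fun i => (ps i).getLast (hpath i).1 with hlastE
    have hle2 : ∀ i, (lastE i).2 = t := by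
      intro i
      have h := (hpath i).2.2.2.2
      rw [List.getLast?_eq_getLast (hpath i).1] at h
      simpa using h
    have himg : inEdges H t = Finset.image lastE Finset.univ := by
      ext e
      rw [inEdges, Finset.mem_filter, Finset.mem_image]
      constructor
      · rintro ⟨heH, het⟩
        rw [hH, Finset.mem_filter] at heH
        obtain ⟨i, hei⟩ := heH.2 het
        have h := Stmt5Aux.end_edge_unique (ps i) s (hpath i) (hsimple i).2 e hei het
        rw [List.getLast?_eq_getLast (hpath i).1] at h
        exact ⟨i, Finset.mem_univ i, show lastE i = e from Option.some.inj h⟩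
      · rintro ⟨i, _, rfl⟩
        refine ⟨?_, hle2 i⟩
        rw [hH, Finset.mem_filter]
        exact ⟨(hpath i).2.1 _ (hlastmem i), fun _ => ⟨i, hlastmem i⟩⟩
    have hinj : Set.InjOn lastE ↑(Finset.univ : Finset (Fin (lam + k))) := by
      intro i _ j _ hij
      by_contra hne
      have h1 : lastE i ∈ ps i := hlastmem i
      have h2 : lastE i ∈ ps j := by
        have h3 : lastE j ∈ ps j := hlastmem j
        rw [hij]
        exact h3
      exact hdisj i j hne _ h1 h2
    rw [himg, Finset.card_image_of_injOn hinj, Finset.card_univ, Fintype.card_fin]
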